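/- arXiv:2412.11744 — 2 statements merged into one kernel-verified Lean document; each statement's English description precedes it below -/
import Mathlib

section
/- If $(T_0, T_1, \ldots, T_B)$ are exchangeable real-valued random variables, then for any $\alpha \in (0,1)$, the randomized p-value $p = \frac{1 + \sum_{b=1}^B \mathbf{1}\{T_b \geq T_0\}}{1+B}$ satisfies $P(p \leq \alpha) \leq \alpha$. -/
open MeasureTheory Finset

open scoped ENNReal

lemma rank_card_le {n : ℕ} (v : Fin n → ℝ) (k : ℕ) :
    (univ.filter (fun i => (univ.filter (fun j => v j ≥ v i)).card ≤ k)).card ≤ k := by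
  set S := univ.filter (fun i => (univ.filter (fun j => v j ≥ v i)).card ≤ k) with hS
  rcases S.eq_empty_or_nonempty with h | h
  · simp [h]
  · obtain ⟨i, hiS, hmin⟩ := S.exists_min_image v h
    have hsub : S ⊆ univ.filter (fun j => v j ≥ v i) := by
      intro j hj
      simp only [mem_filter, mem_univ, true_and]
      exact hmin j hj
    exact le_trans (card_le_card hsub) (mem_filter.mp hiS).2

lemma g_perm {n : ℕ} (σ : Equiv.Perm (Fin n)) (v : Fin n → ℝ) (i : Fin n) :
    (univ.filter (fun j => v (σ j) ≥ v (σ i))).card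
      = (univ.filter (fun j => v j ≥ v (σ i))).card := by
  simp only [Finset.card_filter]
  exact Equiv.sum_comp σ (fun j => if v j ≥ v (σ i) then 1 else 0)

/-- If `(T 0, …, T B)` are exchangeable real-valued random variables, then for any
`α ∈ (0,1)`, the randomized p-value `(1 + #{b ≥ 1 : T b ≥ T 0}) / (1 + B)` satisfies
`P(p ≤ α) ≤ α`. -/
theorem crt_pvalue_valid_of_exchangeable
    {Ω : Type*} [MeasurableSpace Ω] (P : Measure Ω) [IsProbabilityMeasure P]
    (B : ℕ) (T : Fin (B + 1) → Ω → ℝ) (hT : ∀ i, Measurable (T i))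
    (hexch : ∀ σ : Equiv.Perm (Fin (B + 1)),
      Measure.map (fun ω => fun i => T (σ i) ω) P
        = Measure.map (fun ω => fun i => T i ω) P)
    (α : ℝ) (hα : α ∈ Set.Ioo (0 : ℝ) 1) :
    P {ω | (1 + (univ.filter (fun b : Fin B => T b.succ ω ≥ T 0 ω)).card : ℝ)
            / (1 + B) ≤ α} ≤ ENNReal.ofReal α := by
  obtain ⟨hα0, hα1⟩ := hα
  set k : ℕ := ⌊α * (B + 1)⌋₊ with hk
  -- rank function on the path space
  set G : Fin (B + 1) → (Fin (B + 1) → ℝ) → ℕ :=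
    fun i v => (univ.filter (fun j => v j ≥ v i)).card with hG
  have hGmeas : ∀ i, Measurable (G i) := by
    intro i
    simp only [hG, Finset.card_filter]
    apply Finset.measurable_sum
    intro j _
    exact Measurable.ite (measurableSet_le (measurable_pi_apply i) (measurable_pi_apply j))
      measurable_const measurable_const
  set E : Fin (B + 1) → Set Ω := fun i => {ω | G i (fun j => T j ω) ≤ k} with hE
  have hφ : Measurable (fun ω => fun j => T j ω) :=
    measurable_pi_lambda _ (fun j => hT j)
  have hEmeas : ∀ i, MeasurableSet (E i) := by
    intro i
    have : E i = (fun ω => fun j => T j ω) ⁻¹' {v | G i v ≤ k} := rfl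
    rw [this]
    exact hφ ((hGmeas i) measurableSet_Iic)
  -- the target event equals E 0
  have hset : {ω | (1 + (univ.filter (fun b : Fin B => T b.succ ω ≥ T 0 ω)).card : ℝ)
            / (1 + B) ≤ α} = E 0 := by
    ext ω
    have hcount : G 0 (fun j => T j ω)
        = 1 + (univ.filter (fun b : Fin B => T b.succ ω ≥ T 0 ω)).card := by
      simp only [hG, Finset.card_filter]
      rw [Fin.sum_univ_succ]
      simp [le_refl]
    have hBpos : (0 : ℝ) < 1 + B := by positivity
    simp only [hE, Set.mem_setOf_eq, hcount]
    rw [div_le_iff₀ hBpos, hk]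
    rw [Nat.le_floor_iff (by positivity)]
    push_cast
    constructor <;> intro h <;> linarith
  rw [hset]
  -- all E i have the same probability
  have hsame : ∀ i, P (E i) = P (E 0) := by
    intro i
    set σ := Equiv.swap (0 : Fin (B + 1)) i with hσ
    have hφσ : Measurable (fun ω => fun j => T (σ j) ω) :=
      measurable_pi_lambda _ (fun j => hT (σ j))
    have hA : MeasurableSet {v : Fin (B + 1) → ℝ | G 0 v ≤ k} :=
      (hGmeas 0) measurableSet_Iic
    have h1 := hexch σ
    have h2 : Measure.map (fun ω => fun j => T (σ j) ω) P {v | G 0 v ≤ k}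
        = Measure.map (fun ω => fun j => T j ω) P {v | G 0 v ≤ k} := by rw [h1]
    rw [Measure.map_apply hφσ hA, Measure.map_apply hφ hA] at h2
    have hpre : (fun ω => fun j => T (σ j) ω) ⁻¹' {v | G 0 v ≤ k} = E i := by
      ext ω
      simp only [Set.mem_preimage, Set.mem_setOf_eq, hE, hG]
      have := g_perm σ (fun j => T j ω) 0
      simp only [hσ, Equiv.swap_apply_left] at this ⊢
      rw [this]
    rw [hpre] at h2
    exact h2
  -- sum bound
  have hsum : ∑ i : Fin (B + 1), P (E i) ≤ (k : ℝ≥0∞) := by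
    have h1 : ∑ i : Fin (B + 1), P (E i)
        = ∫⁻ ω, ∑ i : Fin (B + 1), (E i).indicator (fun _ => (1 : ℝ≥0∞)) ω ∂P := by
      rw [lintegral_finset_sum _ (fun i _ => measurable_const.indicator (hEmeas i))]
      refine Finset.sum_congr rfl (fun i _ => ?_)
      rw [lintegral_indicator (hEmeas i)]
      simp
    rw [h1]
    have h2 : ∀ ω, ∑ i : Fin (B + 1), (E i).indicator (fun _ => (1 : ℝ≥0∞)) ω
        ≤ (k : ℝ≥0∞) := by
      intro ω
      have : ∑ i : Fin (B + 1), (E i).indicator (fun _ => (1 : ℝ≥0∞)) ω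
          = ((univ.filter (fun i : Fin (B + 1) => ω ∈ E i)).card : ℝ≥0∞) := by
        rw [Finset.card_filter]
        push_cast
        congr 1
        ext i
        by_cases h : ω ∈ E i <;> simp [Set.indicator, h]
      rw [this]
      have := rank_card_le (fun j => T j ω) k
      exact_mod_cast this
    calc ∫⁻ ω, ∑ i : Fin (B + 1), (E i).indicator (fun _ => (1 : ℝ≥0∞)) ω ∂P
        ≤ ∫⁻ _, (k : ℝ≥0∞) ∂P := lintegral_mono h2
      _ = (k : ℝ≥0∞) := by simp
  have hmul : ((B : ℝ≥0∞) + 1) * P (E 0) ≤ (k : ℝ≥0∞) := by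
    have : ∑ i : Fin (B + 1), P (E i) = ((B : ℝ≥0∞) + 1) * P (E 0) := by
      rw [Finset.sum_congr rfl (fun i _ => hsame i), Finset.sum_const, Finset.card_univ]
      simp [mul_comm]
    rw [← this]
    exact hsum
  -- conclude
  have hkle : (k : ℝ≥0∞) ≤ ((B : ℝ≥0∞) + 1) * ENNReal.ofReal α := by
    have hk1 : (k : ℝ) ≤ α * (B + 1) := Nat.floor_le (by positivity)
    have : (k : ℝ≥0∞) = ENNReal.ofReal (k : ℝ) := by simp
    rw [this]
    calc ENNReal.ofReal (k : ℝ) ≤ ENNReal.ofReal (α * (B + 1)) :=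
          ENNReal.ofReal_le_ofReal hk1
      _ = ENNReal.ofReal α * ENNReal.ofReal ((B : ℝ) + 1) := by
          rw [ENNReal.ofReal_mul hα0.le]
      _ = ((B : ℝ≥0∞) + 1) * ENNReal.ofReal α := by
          rw [ENNReal.ofReal_add (by positivity) zero_le_one]
          simp [mul_comm]
  have hfinal := le_trans hmul hkle
  have hne0 : ((B : ℝ≥0∞) + 1) ≠ 0 := by simp
  have hnetop : ((B : ℝ≥0∞) + 1) ≠ ⊤ := by simp [ENNReal.add_ne_top]
  exact (ENNReal.mul_le_mul_iff_right hne0 hnetop).mp hfinal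
end

section
/- Suppose $(T_1, \ldots, T_B)$ are i.i.d. random variables, $T_0'$ is an independent copy with the same distribution, and $T_0$ is an arbitrary random variable (possibly with a different distribution but independent of $(T_1,\ldots,T_B)$). Then for any $\alpha \in (0,1)$, $P\left(\frac{1+\sum_{b=1}^B \mathbf{1}\{T_b \geq T_0\}}{1+B} \leq \alpha\right) \leq \alpha + d_{TV}(\mathcal{L}(T_0), \mathcal{L}(T_0'))$, where $d_{TV}$ is the total variation distance between the laws of $T_0$ and $T_0'$. -/
open MeasureTheory ProbabilityTheory Finset

/-- Total variation distance between two measures: the supremum over measurable sets `A`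
of `|μ A - ν A|`. -/
noncomputable def tvDist {α : Type*} [MeasurableSpace α] (μ ν : Measure α) : ℝ :=
  ⨆ A : {s : Set α // MeasurableSet s}, |(μ A).toReal - (ν A).toReal|

section AuxCRT

open ENNReal

/-- Number of other coordinates at least as large as coordinate `i`. -/
noncomputable def rankCount {n : ℕ} (i : Fin n) (x : Fin n → ℝ) : ℕ :=
  (univ.filter fun j => j ≠ i ∧ x i ≤ x j).card

lemma measurable_count {δ : Type*} [MeasurableSpace δ] {ι : Type*} [Fintype ι]
    (p : ι → δ → Prop) [∀ i x, Decidable (p i x)]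
    (hp : ∀ i, MeasurableSet {x | p i x}) :
    Measurable fun x => (univ.filter fun i => p i x).card := by
  have h : (fun x => ((univ.filter fun i => p i x).card : ℕ))
      = fun x => ∑ i : ι, if p i x then 1 else 0 := by
    funext x; rw [Finset.card_filter]
  rw [h]
  exact Finset.measurable_sum _ fun i _ =>
    Measurable.ite (hp i) measurable_const measurable_const

lemma measurable_rankCount {n : ℕ} (i : Fin n) : Measurable (rankCount i) := by
  apply measurable_count
  intro j
  exact (MeasurableSet.const _).inter
    (measurableSet_le (measurable_pi_apply i) (measurable_pi_apply j))

lemma count_small {n m : ℕ} (x : Fin n → ℝ) :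
    ((univ : Finset (Fin n)).filter fun i => rankCount i x + 1 ≤ m).card ≤ m := by
  set S := (univ : Finset (Fin n)).filter fun i => rankCount i x + 1 ≤ m with hS
  rcases S.eq_empty_or_nonempty with h | h
  · simp [h]
  · obtain ⟨i₀, hi₀S, hmin⟩ := S.exists_min_image x h
    have hsub : S.erase i₀ ⊆ univ.filter fun j => j ≠ i₀ ∧ x i₀ ≤ x j := by
      intro j hj
      rw [Finset.mem_erase] at hj
      simp only [Finset.mem_filter, Finset.mem_univ, true_and]
      exact ⟨hj.1, hmin j hj.2⟩
    have h1 : rankCount i₀ x + 1 ≤ m := (Finset.mem_filter.1 hi₀S).2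
    calc S.card = (S.erase i₀).card + 1 := (Finset.card_erase_add_one hi₀S).symm
      _ ≤ rankCount i₀ x + 1 := by
          have := Finset.card_le_card hsub
          unfold rankCount; omega
      _ ≤ m := h1

lemma rankCount_comp {n : ℕ} (e : Fin n ≃ Fin n) (i : Fin n) (x : Fin n → ℝ) :
    rankCount i (x ∘ e) = rankCount (e i) x := by
  unfold rankCount
  refine Finset.card_equiv e fun j => ?_
  simp only [Finset.mem_filter, Finset.mem_univ, true_and, Function.comp_apply]
  constructor
  · rintro ⟨h1, h2⟩; exact ⟨fun hc => h1 (e.injective hc), h2⟩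
  · rintro ⟨h1, h2⟩; exact ⟨fun hc => h1 (by rw [hc]), h2⟩

lemma rankCount_zero {B : ℕ} (x : Fin (B + 1) → ℝ) :
    rankCount 0 x = (univ.filter fun b : Fin B => x 0 ≤ x b.succ).card := by
  unfold rankCount
  refine Finset.card_bij' (fun j hj => j.pred ?_) (fun b _ => b.succ) ?_ ?_ ?_ ?_
  · exact (Finset.mem_filter.1 hj).2.1
  · intro j hj
    obtain ⟨-, hne, hle⟩ := Finset.mem_filter.1 hj
    simp only [Finset.mem_filter, Finset.mem_univ, true_and, Fin.succ_pred]
    exact hle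
  · intro b hb
    obtain ⟨-, hle⟩ := Finset.mem_filter.1 hb
    simp only [Finset.mem_filter, Finset.mem_univ, true_and]
    exact ⟨Fin.succ_ne_zero b, hle⟩
  · intro j hj; simp
  · intro b hb; simp

section TV
variable {α : Type*} [MeasurableSpace α] (μ ν : Measure α)
  [IsProbabilityMeasure μ] [IsProbabilityMeasure ν]

lemma tvDist_bddAbove :
    BddAbove (Set.range fun A : {s : Set α // MeasurableSet s} =>
      |(μ A).toReal - (ν A).toReal|) := by
  refine ⟨1, ?_⟩
  rintro _ ⟨A, rfl⟩
  have h1 : (μ A).toReal ≤ 1 := by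
    have := prob_le_one (μ := μ) (s := A)
    simpa using ENNReal.toReal_mono ENNReal.one_ne_top this
  have h2 : (ν A).toReal ≤ 1 := by
    have := prob_le_one (μ := ν) (s := A)
    simpa using ENNReal.toReal_mono ENNReal.one_ne_top this
  have h3 : (0:ℝ) ≤ (μ A).toReal := ENNReal.toReal_nonneg
  have h4 : (0:ℝ) ≤ (ν A).toReal := ENNReal.toReal_nonneg
  rw [abs_sub_le_iff]; constructor <;> linarith

lemma tvDist_nonneg : 0 ≤ tvDist μ ν := by
  have := le_ciSup (tvDist_bddAbove μ ν) ⟨∅, MeasurableSet.empty⟩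
  exact le_trans (abs_nonneg _) this

lemma measure_le_add_tvDist {A : Set α} (hA : MeasurableSet A) :
    μ A ≤ ν A + ENNReal.ofReal (tvDist μ ν) := by
  have h1 : (μ A).toReal - (ν A).toReal ≤ tvDist μ ν :=
    le_trans (le_abs_self _) (le_ciSup (tvDist_bddAbove μ ν) ⟨A, hA⟩)
  have h2 : (μ A).toReal ≤ (ν A).toReal + tvDist μ ν := by linarith
  calc μ A = ENNReal.ofReal (μ A).toReal := (ENNReal.ofReal_toReal (measure_ne_top μ A)).symm
    _ ≤ ENNReal.ofReal ((ν A).toReal + tvDist μ ν) := ENNReal.ofReal_le_ofReal h2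
    _ = ν A + ENNReal.ofReal (tvDist μ ν) := by
        rw [ENNReal.ofReal_add ENNReal.toReal_nonneg (tvDist_nonneg μ ν),
          ENNReal.ofReal_toReal (measure_ne_top ν A)]

end TV

/-- Comparison of product measures with the same second factor. -/
lemma prod_measure_le_aux {α β : Type*} [MeasurableSpace α] [MeasurableSpace β]
    (μ μ' : Measure α) (ν : Measure β) [IsProbabilityMeasure μ] [IsProbabilityMeasure μ']
    [IsProbabilityMeasure ν] {c : ℝ}
    (hc : ∀ A : Set α, MeasurableSet A → μ A ≤ μ' A + ENNReal.ofReal c)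
    {S : Set (α × β)} (hS : MeasurableSet S) :
    (μ.prod ν) S ≤ (μ'.prod ν) S + ENNReal.ofReal c := by
  rw [Measure.prod_apply hS, Measure.prod_apply hS]
  set g : α → ℝ≥0∞ := fun t => ν (Prod.mk t ⁻¹' S) with hgdef
  have hgm : Measurable g := measurable_measure_prodMk_left hS
  have hg1 : ∀ t, g t ≤ 1 := fun t => prob_le_one
  set h : α → ℝ := fun t => (g t).toReal with hhdef
  have hh : ∀ t, ENNReal.ofReal (h t) = g t := fun t =>
    ENNReal.ofReal_toReal (lt_of_le_of_lt (hg1 t) one_lt_top).ne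
  have hhm : Measurable h := hgm.ennreal_toReal
  have hh1 : ∀ t, h t ≤ 1 := fun t => by
    simpa [hhdef] using ENNReal.toReal_mono ENNReal.one_ne_top (hg1 t)
  have key : ∀ (κ : Measure α), ∫⁻ t, g t ∂κ = ∫⁻ s in Set.Ioi (0:ℝ), κ {t | s < h t} := by
    intro κ
    rw [← lintegral_eq_lintegral_meas_lt κ (Filter.Eventually.of_forall fun t =>
      ENNReal.toReal_nonneg) hhm.aemeasurable]
    exact lintegral_congr fun t => (hh t).symm
  rw [key μ, key μ']
  have hmono : ∀ᵐ s ∂(volume.restrict (Set.Ioi (0:ℝ))),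
      μ {t | s < h t} ≤ μ' {t | s < h t}
        + (Set.Ioo (0:ℝ) 1).indicator (fun _ => ENNReal.ofReal c) s := by
    filter_upwards [ae_restrict_mem measurableSet_Ioi] with s hs
    rcases lt_or_ge s 1 with hs1 | hs1
    · have hmem : s ∈ Set.Ioo (0:ℝ) 1 := ⟨hs, hs1⟩
      rw [Set.indicator_of_mem hmem]
      exact hc _ (measurableSet_lt measurable_const hhm)
    · have hempty : {t | s < h t} = ∅ := by
        ext t; simp only [Set.mem_setOf_eq, Set.mem_empty_iff_false, iff_false, not_lt]
        exact le_trans (hh1 t) hs1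
      simp [hempty]
  calc ∫⁻ s in Set.Ioi (0:ℝ), μ {t | s < h t}
      ≤ ∫⁻ s in Set.Ioi (0:ℝ), (μ' {t | s < h t}
          + (Set.Ioo (0:ℝ) 1).indicator (fun _ => ENNReal.ofReal c) s) :=
        lintegral_mono_ae hmono
    _ = (∫⁻ s in Set.Ioi (0:ℝ), μ' {t | s < h t})
          + ∫⁻ s in Set.Ioi (0:ℝ), (Set.Ioo (0:ℝ) 1).indicator (fun _ => ENNReal.ofReal c) s :=
        lintegral_add_right _ (measurable_const.indicator measurableSet_Ioo)
    _ = (∫⁻ s in Set.Ioi (0:ℝ), μ' {t | s < h t}) + ENNReal.ofReal c := by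
        congr 1
        rw [lintegral_indicator measurableSet_Ioo,
          Measure.restrict_restrict measurableSet_Ioo]
        have hinter : Set.Ioo (0:ℝ) 1 ∩ Set.Ioi 0 = Set.Ioo 0 1 := by
          rw [Set.inter_eq_left]; exact fun s hs => hs.1
        rw [hinter, setLIntegral_const, Real.volume_Ioo]
        simp

lemma map_fun_eq_pi {Ω : Type*} [MeasurableSpace Ω] (P : Measure Ω) [IsProbabilityMeasure P]
    {n : ℕ} (X : Fin n → Ω → ℝ) (hX : ∀ i, Measurable (X i))
    (h : iIndepFun X P) :
    Measure.map (fun ω i => X i ω) P = Measure.pi (fun i => Measure.map (X i) P) := by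
  haveI : ∀ i, IsProbabilityMeasure (Measure.map (X i) P) := fun i =>
    Measure.isProbabilityMeasure_map (hX i).aemeasurable
  refine (Measure.pi_eq fun s hs => ?_).symm
  rw [Measure.map_apply (measurable_pi_lambda _ hX) (MeasurableSet.univ_pi hs)]
  have hpre : (fun ω i => X i ω) ⁻¹' Set.pi Set.univ s = ⋂ i ∈ Finset.univ, X i ⁻¹' s i := by
    ext ω; simp [Set.mem_pi]
  rw [hpre, h.measure_inter_preimage_eq_mul univ (fun i _ => hs i)]
  exact Finset.prod_congr rfl fun i _ => (Measure.map_apply (hX i) (hs i)).symm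

lemma pi_exchange {n : ℕ} (μ' : Measure ℝ) [IsProbabilityMeasure μ'] (m : ℕ)
    (i i₀ : Fin n) :
    Measure.pi (fun _ : Fin n => μ') {x | rankCount i x + 1 ≤ m}
      = Measure.pi (fun _ : Fin n => μ') {x | rankCount i₀ x + 1 ≤ m} := by
  set π := Measure.pi (fun _ : Fin n => μ') with hπ
  set e : Fin n ≃ Fin n := Equiv.swap i i₀ with he
  set Φ : (Fin n → ℝ) ≃ᵐ (Fin n → ℝ) := MeasurableEquiv.piCongrLeft (fun _ => ℝ) e with hΦ
  have hmap : π.map Φ = π := Measure.pi_map_piCongrLeft e (fun _ => μ')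
  have hΦx : ∀ x : Fin n → ℝ, Φ x = x ∘ e.symm := by
    intro x; funext j
    have := MeasurableEquiv.piCongrLeft_apply_apply (β := fun _ => ℝ) e x (e.symm j)
    rwa [Equiv.apply_symm_apply] at this
  have hpre : Φ ⁻¹' {x | rankCount i x + 1 ≤ m} = {x | rankCount i₀ x + 1 ≤ m} := by
    ext x
    simp only [Set.mem_preimage, Set.mem_setOf_eq, hΦx]
    rw [rankCount_comp e.symm i x]
    have hsw : e.symm i = i₀ := by simp [he, Equiv.symm_swap, Equiv.swap_apply_left]
    rw [hsw]
  calc π {x | rankCount i x + 1 ≤ m} = (π.map Φ) {x | rankCount i x + 1 ≤ m} := by rw [hmap]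
    _ = π (Φ ⁻¹' {x | rankCount i x + 1 ≤ m}) := MeasurableEquiv.map_apply Φ _
    _ = _ := by rw [hpre]

lemma pi_rank_bound {n : ℕ} (μ' : Measure ℝ) [IsProbabilityMeasure μ'] (m : ℕ) (α : ℝ)
    (hm : (m : ℝ) ≤ α * n) (i₀ : Fin n) :
    Measure.pi (fun _ : Fin n => μ') {x | rankCount i₀ x + 1 ≤ m} ≤ ENNReal.ofReal α := by
  set π := Measure.pi (fun _ : Fin n => μ') with hπ
  set E : Fin n → Set (Fin n → ℝ) := fun i => {x | rankCount i x + 1 ≤ m} with hE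
  have hEmeas : ∀ i, MeasurableSet (E i) := fun i =>
    (measurable_rankCount i) ((Set.to_countable {k : ℕ | k + 1 ≤ m}).measurableSet)
  have hn : 0 < n := i₀.pos
  have hsum : ∑ i : Fin n, π (E i) ≤ (m : ℝ≥0∞) := by
    have h1 : ∀ i : Fin n, π (E i) = ∫⁻ x, (E i).indicator (fun _ => (1:ℝ≥0∞)) x ∂π :=
      fun i => (lintegral_indicator_one (hEmeas i)).symm
    calc ∑ i : Fin n, π (E i)
        = ∫⁻ x, ∑ i : Fin n, (E i).indicator (fun _ => (1:ℝ≥0∞)) x ∂π := by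
          rw [lintegral_finset_sum]
          · exact Finset.sum_congr rfl fun i _ => h1 i
          · exact fun i _ => measurable_const.indicator (hEmeas i)
      _ ≤ ∫⁻ _x, (m : ℝ≥0∞) ∂π := by
          refine lintegral_mono fun x => ?_
          have hcard : ∑ i : Fin n, (E i).indicator (fun _ => (1:ℝ≥0∞)) x
              = ((univ.filter fun i : Fin n => x ∈ E i).card : ℝ≥0∞) := by
            rw [← Finset.sum_boole]
            exact Finset.sum_congr rfl fun i _ => by rw [Set.indicator_apply]
          rw [hcard]
          exact (Nat.cast_le (α := ℝ≥0∞)).2 (by convert count_small (m := m) x; simp [hE])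
      _ = (m : ℝ≥0∞) := by simp
  have hkey : ∀ i : Fin n, π (E i) = π (E i₀) := fun i => pi_exchange μ' m i i₀
  have htot : (n : ℝ≥0∞) * π (E i₀) ≤ (m : ℝ≥0∞) := by
    have hs : ∑ i : Fin n, π (E i) = (n : ℝ≥0∞) * π (E i₀) := by
      rw [Finset.sum_congr rfl fun i _ => hkey i, Finset.sum_const, Finset.card_univ,
        Fintype.card_fin, nsmul_eq_mul]
    rwa [hs] at hsum
  have hn0 : (n : ℝ≥0∞) ≠ 0 := Nat.cast_ne_zero.2 hn.ne'
  have hntop : (n : ℝ≥0∞) ≠ ∞ := natCast_ne_top n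
  rw [← ENNReal.mul_le_mul_iff_right hn0 hntop]
  calc (n : ℝ≥0∞) * π (E i₀) ≤ (m : ℝ≥0∞) := htot
    _ ≤ (n : ℝ≥0∞) * ENNReal.ofReal α := by
        have hmeq : (m : ℝ≥0∞) = ENNReal.ofReal (m : ℝ) := (ENNReal.ofReal_natCast m).symm
        rw [hmeq]
        calc ENNReal.ofReal (m : ℝ) ≤ ENNReal.ofReal (α * n) := ENNReal.ofReal_le_ofReal hm
          _ = ENNReal.ofReal α * ENNReal.ofReal (n : ℝ) := by
              rw [ENNReal.ofReal_mul']; exact Nat.cast_nonneg n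
          _ = (n : ℝ≥0∞) * ENNReal.ofReal α := by rw [ENNReal.ofReal_natCast, mul_comm]

end AuxCRT

/-- Suppose `(T 1, …, T B)` are i.i.d., `T₀'` is an independent copy with the same
distribution, and `T₀` is an arbitrary random variable independent of `(T 1, …, T B)`.
Then for any `α ∈ (0,1)`,
`P((1 + ∑ 1{T b ≥ T₀})/(1+B) ≤ α) ≤ α + d_TV(ℒ(T₀), ℒ(T₀'))`. -/
theorem crt_pvalue_bound_of_approximate_sampling
    {Ω : Type*} [MeasurableSpace Ω] (P : Measure Ω) [IsProbabilityMeasure P]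
    (B : ℕ) (T : Fin B → Ω → ℝ) (T₀ T₀' : Ω → ℝ)
    (hT : ∀ b, Measurable (T b)) (hT₀ : Measurable T₀) (hT₀' : Measurable T₀')
    (hiid : iIndepFun (Fin.cons T₀' T : Fin (B + 1) → Ω → ℝ) P)
    (hident : ∀ b : Fin B, Measure.map (T b) P = Measure.map T₀' P)
    (hindep : iIndepFun (Fin.cons T₀ T : Fin (B + 1) → Ω → ℝ) P)
    (α : ℝ) (hα : α ∈ Set.Ioo (0 : ℝ) 1) :
    P {ω | (1 + (univ.filter (fun b : Fin B => T b ω ≥ T₀ ω)).card : ℝ) / (1 + B) ≤ α}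
      ≤ ENNReal.ofReal (α + tvDist (Measure.map T₀ P) (Measure.map T₀' P)) := by
  obtain ⟨hα0, hα1⟩ := hα
  set μ := Measure.map T₀ P with hμ
  set μ' := Measure.map T₀' P with hμ'
  haveI : IsProbabilityMeasure μ := Measure.isProbabilityMeasure_map hT₀.aemeasurable
  haveI : IsProbabilityMeasure μ' := Measure.isProbabilityMeasure_map hT₀'.aemeasurable
  set m := ⌊α * (1 + B)⌋₊ with hmdef
  have hBpos : (0:ℝ) < 1 + B := by positivity
  have hcons : ∀ i : Fin (B+1), Measurable (((Fin.cons T₀ T : Fin (B+1) → Ω → ℝ)) i) := by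
    intro i
    refine Fin.cases (motive := fun i => Measurable (((Fin.cons T₀ T : Fin (B+1) → Ω → ℝ)) i)) ?_ ?_ i
    · simpa using hT₀
    · intro b; simpa using hT b
  have hcons' : ∀ i : Fin (B+1), Measurable (((Fin.cons T₀' T : Fin (B+1) → Ω → ℝ)) i) := by
    intro i
    refine Fin.cases (motive := fun i => Measurable (((Fin.cons T₀' T : Fin (B+1) → Ω → ℝ)) i)) ?_ ?_ i
    · simpa using hT₀'
    · intro b; simpa using hT b
  haveI : ∀ i : Fin (B+1), IsProbabilityMeasure (Measure.map (((Fin.cons T₀ T : Fin (B+1) → Ω → ℝ)) i) P) := fun i =>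
    Measure.isProbabilityMeasure_map (hcons i).aemeasurable
  haveI : ∀ i : Fin (B+1), IsProbabilityMeasure (Measure.map (((Fin.cons T₀' T : Fin (B+1) → Ω → ℝ)) i) P) := fun i =>
    Measure.isProbabilityMeasure_map (hcons' i).aemeasurable
  set X : Ω → Fin (B+1) → ℝ := fun ω i => ((Fin.cons T₀ T : Fin (B+1) → Ω → ℝ)) i ω with hX
  have hXmeas : Measurable X := measurable_pi_lambda _ hcons
  set E : Set (Fin (B+1) → ℝ) := {x | rankCount 0 x + 1 ≤ m} with hEdef
  have hE : MeasurableSet E :=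
    (measurable_rankCount 0) ((Set.to_countable {k : ℕ | k + 1 ≤ m}).measurableSet)
  -- rewrite the event
  have hev : {ω | (1 + (univ.filter (fun b : Fin B => T b ω ≥ T₀ ω)).card : ℝ) / (1 + B) ≤ α}
      = X ⁻¹' E := by
    ext ω
    have hXω : rankCount 0 (X ω)
        = (univ.filter (fun b : Fin B => T b ω ≥ T₀ ω)).card := by
      rw [rankCount_zero]
      congr 1
    simp only [Set.mem_setOf_eq, Set.mem_preimage, hEdef, hXω]
    rw [div_le_iff₀ hBpos]
    have hcast : (1 + ((univ.filter (fun b : Fin B => T b ω ≥ T₀ ω)).card : ℝ))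
        = (((univ.filter (fun b : Fin B => T b ω ≥ T₀ ω)).card + 1 : ℕ) : ℝ) := by
      push_cast; ring
    rw [hcast]
    rw [Nat.le_floor_iff (by positivity)]
  rw [hev, ← Measure.map_apply hXmeas hE]
  -- joint laws
  have hmapX : Measure.map X P = Measure.pi (fun i => Measure.map (((Fin.cons T₀ T : Fin (B+1) → Ω → ℝ)) i) P) :=
    map_fun_eq_pi P _ hcons hindep
  have hmargs : (fun i : Fin (B+1) => Measure.map (((Fin.cons T₀' T : Fin (B+1) → Ω → ℝ)) i) P) = fun _ => μ' := by
    funext i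
    refine Fin.cases ?_ ?_ i
    · rw [Fin.cons_zero]
    · intro b; rw [Fin.cons_succ, hident b]
  have hmapX' : Measure.map (fun ω i => ((Fin.cons T₀' T : Fin (B+1) → Ω → ℝ)) i ω) P
      = Measure.pi (fun _ : Fin (B+1) => μ') := by
    rw [map_fun_eq_pi P _ hcons' hiid, hmargs]
  -- product structure via piFinSuccAbove at coordinate 0
  set Λ : Measure (Fin B → ℝ) := Measure.pi (fun _ : Fin B => μ') with hΛ
  set f : (Fin (B+1) → ℝ) ≃ᵐ ℝ × (Fin B → ℝ) :=
    MeasurableEquiv.piFinSuccAbove (fun _ : Fin (B+1) => ℝ) 0 with hf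
  have hpres : MeasurePreserving f
      (Measure.pi (fun i => Measure.map (((Fin.cons T₀ T : Fin (B+1) → Ω → ℝ)) i) P)) (μ.prod Λ) := by
    have h0 := measurePreserving_piFinSuccAbove
      (fun i : Fin (B+1) => Measure.map (((Fin.cons T₀ T : Fin (B+1) → Ω → ℝ)) i) P) 0
    have hz : Measure.map (((Fin.cons T₀ T : Fin (B+1) → Ω → ℝ)) (0 : Fin (B+1))) P = μ := by rw [Fin.cons_zero]
    have hsecond : (fun j : Fin B => Measure.map (((Fin.cons T₀ T : Fin (B+1) → Ω → ℝ)) ((0:Fin (B+1)).succAbove j)) P)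
        = fun _ : Fin B => μ' := by
      funext j
      rw [Fin.succAbove_zero, Fin.cons_succ, hident j]
    rw [hz, hsecond] at h0
    exact h0
  have hpres' : MeasurePreserving f (Measure.pi (fun _ : Fin (B+1) => μ')) (μ'.prod Λ) := by
    have h0 := measurePreserving_piFinSuccAbove (fun _ : Fin (B+1) => μ') 0
    exact h0
  set S : Set (ℝ × (Fin B → ℝ)) :=
    {p | (univ.filter fun b : Fin B => p.1 ≤ p.2 b).card + 1 ≤ m} with hSdef
  have hScount : Measurable fun p : ℝ × (Fin B → ℝ) =>
      (univ.filter fun b : Fin B => p.1 ≤ p.2 b).card := by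
    apply measurable_count
    intro b
    exact measurableSet_le measurable_fst ((measurable_pi_apply b).comp measurable_snd)
  have hS : MeasurableSet S :=
    hScount ((Set.to_countable {k : ℕ | k + 1 ≤ m}).measurableSet)
  have hfE : f ⁻¹' S = E := by
    ext x
    have hfx1 : (f x).1 = x 0 := rfl
    have hfx2 : ∀ b : Fin B, (f x).2 b = x b.succ := by
      intro b
      show x ((0:Fin (B+1)).succAbove b) = x b.succ
      rw [Fin.succAbove_zero]
    simp only [Set.mem_preimage, hSdef, Set.mem_setOf_eq, hEdef]
    have hcount : (univ.filter fun b : Fin B => (f x).1 ≤ (f x).2 b).card = rankCount 0 x := by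
      rw [rankCount_zero]
      congr 1
    rw [hcount]
  have step1 : (Measure.map X P) E = (μ.prod Λ) S := by
    rw [hmapX, ← hpres.map_eq, MeasurableEquiv.map_apply, hfE]
  have step2 : (μ.prod Λ) S ≤ (μ'.prod Λ) S + ENNReal.ofReal (tvDist μ μ') :=
    prod_measure_le_aux μ μ' Λ (fun A hA => measure_le_add_tvDist μ μ' hA) hS
  have step3 : (μ'.prod Λ) S = (Measure.pi (fun _ : Fin (B+1) => μ')) E := by
    rw [← hpres'.map_eq, MeasurableEquiv.map_apply, hfE]
  have step4 : (Measure.pi (fun _ : Fin (B+1) => μ')) E ≤ ENNReal.ofReal α := by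
    refine pi_rank_bound μ' m α ?_ 0
    have h1 : (m : ℝ) ≤ α * (1 + B) := Nat.floor_le (by positivity)
    have h2 : α * (1 + B) = α * ((B + 1 : ℕ) : ℝ) := by push_cast; ring
    rw [← h2]; exact h1
  calc (Measure.map X P) E = (μ.prod Λ) S := step1
    _ ≤ (μ'.prod Λ) S + ENNReal.ofReal (tvDist μ μ') := step2
    _ = (Measure.pi (fun _ : Fin (B+1) => μ')) E + ENNReal.ofReal (tvDist μ μ') := by
        rw [step3]
    _ ≤ ENNReal.ofReal α + ENNReal.ofReal (tvDist μ μ') := by gcongr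
    _ = ENNReal.ofReal (α + tvDist μ μ') := (ENNReal.ofReal_add hα0.le (tvDist_nonneg μ μ')).symm
end
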